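/- arXiv:2306.10795 — 4 statements merged into one kernel-verified Lean document; each statement's English description precedes it below -/
import Mathlib

section
/- Let X be a random variable taking values in the closed unit disk with law μ, and suppose there exist constants ε, M₁, M₂ ∈ (0, ∞) such that for all z ∈ 𝔻 and all 0 < r ≤ 2 one has M₁·r^ε ≤ μ(B(z, r)) ≤ M₂·r^ε. Fix p > 0 and define F_p(z) := E[|log|z − X||^p] for z ∈ 𝔻. Then there exist constants C₁, C₂ > 0 depending only on p, ε, M₁, M₂ such that C₁ ≤ F_p(z) ≤ C₂ for all z ∈ 𝔻. -/
open MeasureTheory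

private lemma aux_summable (p ε : ℝ) (hε : 0 < ε) :
    Summable (fun k : ℕ => (((k : ℝ) + 1) * Real.log 2) ^ p * ((2:ℝ)⁻¹ ^ k) ^ ε) := by
  set q : ℝ := (2:ℝ)⁻¹ ^ ε with hq
  have hq0 : 0 < q := Real.rpow_pos_of_pos (by norm_num) ε
  have hq1 : q < 1 := Real.rpow_lt_one (by norm_num) (by norm_num) hε
  have hpow : ∀ k : ℕ, ((2:ℝ)⁻¹ ^ k) ^ ε = q ^ k := by
    intro k
    rw [← Real.rpow_natCast (2:ℝ)⁻¹ k, ← Real.rpow_natCast q k, hq, ← Real.rpow_mul (by norm_num),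
      ← Real.rpow_mul (by norm_num), mul_comm]
  set n : ℕ := ⌈p⌉₊ with hn
  have hgeom : Summable (fun k : ℕ => ((k : ℝ) + 1) ^ n * q ^ k) := by
    have h := summable_pow_mul_geometric_of_norm_lt_one (R := ℝ) n
      (by rw [Real.norm_eq_abs, abs_of_pos hq0]; exact hq1)
    have h2 := (summable_nat_add_iff (f := fun k : ℕ => (k:ℝ) ^ n * q ^ k) 1).2 h
    have h3 := h2.mul_left q⁻¹
    refine h3.congr fun k => ?_
    push_cast
    rw [pow_succ]
    field_simp
  have hlog : (0:ℝ) < Real.log 2 := Real.log_pos (by norm_num)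
  refine Summable.of_nonneg_of_le (fun k => ?_) (fun k => ?_) (hgeom.mul_left ((Real.log 2) ^ p))
  · positivity
  · rw [hpow]
    have h1 : (((k : ℝ) + 1) * Real.log 2) ^ p = ((k:ℝ)+1) ^ p * (Real.log 2) ^ p :=
      Real.mul_rpow (by positivity) hlog.le
    have h2 : ((k:ℝ)+1) ^ p ≤ ((k:ℝ)+1) ^ (n : ℝ) :=
      Real.rpow_le_rpow_of_exponent_le (by linarith [Nat.cast_nonneg (α := ℝ) k])
        (Nat.le_ceil p)
    have h3 : ((k:ℝ)+1) ^ (n:ℝ) = ((k:ℝ)+1) ^ n := Real.rpow_natCast _ n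
    rw [h1]
    have h4 : ((k:ℝ)+1) ^ p * Real.log 2 ^ p ≤ ((k:ℝ)+1) ^ n * Real.log 2 ^ p := by
      apply mul_le_mul_of_nonneg_right _ (by positivity)
      rw [← h3]; exact h2
    calc ((k:ℝ)+1) ^ p * Real.log 2 ^ p * q ^ k ≤ ((k:ℝ)+1) ^ n * Real.log 2 ^ p * q ^ k := by
          apply mul_le_mul_of_nonneg_right h4 (by positivity)
      _ = Real.log 2 ^ p * (((k:ℝ)+1) ^ n * q ^ k) := by ring

private lemma aux_cover (z : ℂ) (w : ℂ) (hne : w ≠ z) (hw : w ∈ Metric.ball z 1) :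
    ∃ k : ℕ, w ∈ Metric.ball z ((2:ℝ)⁻¹^k) \ Metric.ball z ((2:ℝ)⁻¹^(k+1)) := by
  classical
  have hd0 : 0 < dist w z := dist_pos.2 hne
  have hd1 : dist w z < 1 := Metric.mem_ball.1 hw
  have hex : ∃ n : ℕ, (2:ℝ)⁻¹ ^ (n+1) ≤ dist w z := by
    obtain ⟨n, hn⟩ := exists_pow_lt_of_lt_one hd0 (by norm_num : (2:ℝ)⁻¹ < 1)
    exact ⟨n, le_trans (pow_le_pow_of_le_one (by norm_num) (by norm_num) (Nat.le_succ n)) hn.le⟩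
  refine ⟨Nat.find hex, ?_, ?_⟩
  · rw [Metric.mem_ball]
    rcases Nat.eq_zero_or_pos (Nat.find hex) with h0 | hpos
    · rw [h0, pow_zero]; exact hd1
    · obtain ⟨m, hm⟩ := Nat.exists_eq_succ_of_ne_zero hpos.ne'
      have := Nat.find_min hex (m := m) (by omega)
      rw [hm]
      push_neg at this
      exact this
  · rw [Metric.mem_ball]
    push_neg
    exact Nat.find_spec hex

/-- Uniform two-sided bounds on `F_p(z) = E[|log|z - X||^p]` for a law `μ` on the closed
unit disk whose ball measures satisfy `M₁ r^ε ≤ μ(B(z,r)) ≤ M₂ r^ε`. -/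
theorem log_moment_bounds
    (μ : Measure ℂ) [IsProbabilityMeasure μ] (hsupp : μ (Metric.closedBall (0 : ℂ) 1) = 1)
    (ε M₁ M₂ : ℝ) (hε : 0 < ε) (hM₁ : 0 < M₁) (hM₂ : 0 < M₂)
    (hball : ∀ z ∈ Metric.ball (0 : ℂ) 1, ∀ r : ℝ, 0 < r → r ≤ 2 →
      M₁ * r ^ ε ≤ (μ (Metric.ball z r)).toReal ∧ (μ (Metric.ball z r)).toReal ≤ M₂ * r ^ ε)
    (p : ℝ) (hp : 0 < p) :
    ∃ C₁ C₂ : ℝ, 0 < C₁ ∧ 0 < C₂ ∧ ∀ z ∈ Metric.ball (0 : ℂ) 1,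
      C₁ ≤ ∫ w, |Real.log (‖z - w‖)| ^ p ∂μ ∧
      ∫ w, |Real.log (‖z - w‖)| ^ p ∂μ ≤ C₂ := by
  have hlog2 : (0:ℝ) < Real.log 2 := Real.log_pos (by norm_num)
  -- the summable sequence of dyadic contributions
  set c : ℕ → ℝ := fun k => (((k : ℝ) + 1) * Real.log 2) ^ p * (M₂ * ((2:ℝ)⁻¹ ^ k) ^ ε)
    with hc
  have hc_nonneg : ∀ k, 0 ≤ c k := by
    intro k
    have : (0:ℝ) ≤ ((k : ℝ) + 1) * Real.log 2 := by positivity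
    positivity
  have hc_summable : Summable c := by
    have h := (aux_summable p ε hε).mul_left M₂
    refine h.congr fun k => ?_
    simp only [hc]; ring
  -- the uniform upper bound, as an extended real
  set T : ENNReal := ENNReal.ofReal (Real.log 2 ^ p) +
      ENNReal.ofReal (∑' k, c k) with hT
  have hT_ne_top : T ≠ ⊤ := by simp [hT]
  refine ⟨Real.log 2 ^ p * (M₁ * (2:ℝ)⁻¹ ^ ε), T.toReal, ?_, ?_, ?_⟩
  · have h1 : (0:ℝ) < Real.log 2 ^ p := Real.rpow_pos_of_pos hlog2 p
    have h2 : (0:ℝ) < (2:ℝ)⁻¹ ^ (ε:ℝ) := Real.rpow_pos_of_pos (by norm_num) ε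
    positivity
  · refine ENNReal.toReal_pos (fun h0 => ?_) hT_ne_top
    rw [hT, add_eq_zero] at h0
    have := h0.1
    rw [ENNReal.ofReal_eq_zero] at this
    exact absurd this (not_le.2 (Real.rpow_pos_of_pos hlog2 p))
  intro z hz
  set f : ℂ → ℝ := fun w => |Real.log (‖z - w‖)| ^ p with hfdef
  have hf_meas : Measurable f := by
    have h1 : Measurable fun w : ℂ => ‖z - w‖ :=
      (continuous_norm.comp (continuous_const.sub continuous_id)).measurable
    exact (Real.measurable_log.comp h1).abs.pow_const p
  have hf_nonneg : ∀ w, 0 ≤ f w := fun w => Real.rpow_nonneg (abs_nonneg _) p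
  have habs : ∀ w : ℂ, ‖z - w‖ = dist w z := by
    intro w; rw [dist_comm, Complex.dist_eq]
  -- the singleton {z} is null
  have hz_null : μ {z} = 0 := by
    set q : ℝ := (2:ℝ)⁻¹ ^ (ε:ℝ) with hq
    have hq0 : 0 < q := Real.rpow_pos_of_pos (by norm_num) ε
    have hq1 : q < 1 := Real.rpow_lt_one (by norm_num) (by norm_num) hε
    have hpow : ∀ k : ℕ, ((2:ℝ)⁻¹ ^ k) ^ (ε:ℝ) = q ^ k := by
      intro k
      rw [← Real.rpow_natCast (2:ℝ)⁻¹ k, ← Real.rpow_natCast q k, hq,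
        ← Real.rpow_mul (by norm_num), ← Real.rpow_mul (by norm_num), mul_comm]
    have key : ∀ k : ℕ, (μ {z}).toReal ≤ M₂ * q ^ (k+1) := by
      intro k
      have hrpos : (0:ℝ) < (2:ℝ)⁻¹ ^ (k+1) := by positivity
      have hrle : ((2:ℝ)⁻¹) ^ (k+1) ≤ 2 :=
        le_trans (pow_le_one₀ (by norm_num) (by norm_num)) (by norm_num)
      have h1 : μ {z} ≤ μ (Metric.ball z ((2:ℝ)⁻¹ ^ (k+1))) :=
        measure_mono (by simp [Metric.mem_ball, hrpos])
      have h2 := (hball z hz _ hrpos hrle).2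
      rw [hpow] at h2
      exact le_trans (ENNReal.toReal_mono (measure_ne_top μ _) h1) h2
    have htend : Filter.Tendsto (fun k : ℕ => M₂ * q ^ (k+1)) Filter.atTop (nhds 0) := by
      have h := tendsto_pow_atTop_nhds_zero_of_lt_one hq0.le hq1
      have h2 := (h.comp (Filter.tendsto_add_atTop_nat 1)).const_mul M₂
      simpa using h2
    have hle0 : (μ {z}).toReal ≤ 0 := ge_of_tendsto' htend key
    have := le_antisymm hle0 ENNReal.toReal_nonneg
    rcases (ENNReal.toReal_eq_zero_iff _).1 this with h | h
    · exact h
    · exact absurd h (measure_ne_top μ _)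
  -- complement of the closed unit ball is null
  have hS_null : μ (Metric.closedBall (0:ℂ) 1)ᶜ = 0 := by
    rw [measure_compl measurableSet_closedBall (measure_ne_top μ _), hsupp, measure_univ]
    simp
  -- the dyadic annuli and the far set
  set A : ℕ → Set ℂ := fun k =>
    Metric.ball z ((2:ℝ)⁻¹^k) \ Metric.ball z ((2:ℝ)⁻¹^(k+1)) with hA
  set B : Set ℂ := Metric.closedBall (0:ℂ) 1 \ Metric.ball z 1 with hB
  have hA_meas : ∀ k, MeasurableSet (A k) := fun k =>
    measurableSet_ball.diff measurableSet_ball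
  have hB_meas : MeasurableSet B := measurableSet_closedBall.diff measurableSet_ball
  set U : Set ℂ := B ∪ ⋃ k, A k with hU
  have hU_meas : MeasurableSet U := hB_meas.union (MeasurableSet.iUnion hA_meas)
  have hUc_null : μ Uᶜ = 0 := by
    have hsub : Uᶜ ⊆ {z} ∪ (Metric.closedBall (0:ℂ) 1)ᶜ := by
      intro w hw
      by_contra hcon
      simp only [Set.mem_union, Set.mem_singleton_iff, Set.mem_compl_iff, not_or, not_not]
        at hcon
      obtain ⟨hne, hwS⟩ := hcon
      apply hw
      by_cases hwb : w ∈ Metric.ball z 1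
      · obtain ⟨k, hk⟩ := aux_cover z w hne hwb
        exact Or.inr (Set.mem_iUnion.2 ⟨k, hk⟩)
      · exact Or.inl ⟨hwS, hwb⟩
    refine le_antisymm (le_trans (measure_mono hsub) ?_) (by simp)
    calc μ ({z} ∪ (Metric.closedBall (0:ℂ) 1)ᶜ) ≤
        μ {z} + μ (Metric.closedBall (0:ℂ) 1)ᶜ := measure_union_le _ _
      _ = 0 := by rw [hz_null, hS_null, add_zero]
  -- pointwise bounds
  have hf_on_B : ∀ w ∈ B, f w ≤ Real.log 2 ^ p := by
    intro w hw
    obtain ⟨hwS, hwb⟩ := hw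
    have hd1 : (1:ℝ) ≤ ‖z - w‖ := by
      rw [habs]; exact not_lt.1 (fun h => hwb (Metric.mem_ball.2 h))
    have hd2 : ‖z - w‖ ≤ 2 := by
      have h1 : ‖z‖ ≤ 1 := by
        have := Metric.mem_ball.1 hz; rw [Complex.dist_eq, sub_zero] at this; exact this.le
      have h2 : ‖w‖ ≤ 1 := by
        have := Metric.mem_closedBall.1 hwS; rwa [Complex.dist_eq, sub_zero] at this
      calc ‖z - w‖ ≤ ‖z‖ + ‖w‖ := by
            simpa [sub_eq_add_neg] using norm_add_le z (-w)
        _ ≤ 2 := by linarith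
    have hlogle : |Real.log (‖z - w‖)| ≤ Real.log 2 := by
      rw [abs_of_nonneg (Real.log_nonneg hd1)]
      exact Real.log_le_log (by linarith) hd2
    exact Real.rpow_le_rpow (abs_nonneg _) hlogle hp.le
  have hf_on_A : ∀ k : ℕ, ∀ w ∈ A k, f w ≤ (((k:ℝ) + 1) * Real.log 2) ^ p := by
    intro k w hw
    obtain ⟨hw1, hw2⟩ := hw
    have hdlt : ‖z - w‖ < (2:ℝ)⁻¹ ^ k := by
      rw [habs]; exact Metric.mem_ball.1 hw1
    have hdge : (2:ℝ)⁻¹ ^ (k+1) ≤ ‖z - w‖ := by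
      rw [habs]; exact not_lt.1 (fun h => hw2 (Metric.mem_ball.2 h))
    have hdpos : (0:ℝ) < ‖z - w‖ := lt_of_lt_of_le (by positivity) hdge
    have hdle1 : ‖z - w‖ < 1 :=
      lt_of_lt_of_le hdlt (pow_le_one₀ (by norm_num) (by norm_num))
    have hlogneg : Real.log (‖z - w‖) ≤ 0 :=
      Real.log_nonpos hdpos.le hdle1.le
    have hlogle : |Real.log (‖z - w‖)| ≤ ((k:ℝ) + 1) * Real.log 2 := by
      rw [abs_of_nonpos hlogneg]
      have h1 : Real.log ((2:ℝ)⁻¹ ^ (k+1)) ≤ Real.log (‖z - w‖) :=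
        Real.log_le_log (by positivity) hdge
      have h2 : Real.log ((2:ℝ)⁻¹ ^ (k+1)) = -(((k:ℝ)+1) * Real.log 2) := by
        rw [Real.log_pow, Real.log_inv]; push_cast; ring
      linarith
    exact Real.rpow_le_rpow (abs_nonneg _) hlogle hp.le
  -- the lintegral bound
  have hlint : ∫⁻ w, ENNReal.ofReal (f w) ∂μ ≤ T := by
    rw [← lintegral_add_compl (fun w => ENNReal.ofReal (f w)) hU_meas]
    have h0 : ∫⁻ w in Uᶜ, ENNReal.ofReal (f w) ∂μ = 0 :=
      setLIntegral_measure_zero _ _ hUc_null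
    rw [h0, add_zero]
    calc ∫⁻ w in U, ENNReal.ofReal (f w) ∂μ
        ≤ ∫⁻ w in B, ENNReal.ofReal (f w) ∂μ + ∫⁻ w in ⋃ k, A k, ENNReal.ofReal (f w) ∂μ :=
          lintegral_union_le _ _ _
      _ ≤ ENNReal.ofReal (Real.log 2 ^ p) + ENNReal.ofReal (∑' k, c k) := by
          gcongr
          · calc ∫⁻ w in B, ENNReal.ofReal (f w) ∂μ
                ≤ ∫⁻ _ in B, ENNReal.ofReal (Real.log 2 ^ p) ∂μ :=
                  setLIntegral_mono' hB_meas fun w hw =>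
                    ENNReal.ofReal_le_ofReal (hf_on_B w hw)
              _ = ENNReal.ofReal (Real.log 2 ^ p) * μ B := setLIntegral_const _ _
              _ ≤ ENNReal.ofReal (Real.log 2 ^ p) * 1 := by gcongr; exact prob_le_one
              _ = ENNReal.ofReal (Real.log 2 ^ p) := mul_one _
          · calc ∫⁻ w in ⋃ k, A k, ENNReal.ofReal (f w) ∂μ
                ≤ ∑' k, ∫⁻ w in A k, ENNReal.ofReal (f w) ∂μ := lintegral_iUnion_le _ _
              _ ≤ ∑' k, ENNReal.ofReal (c k) := by
                  refine ENNReal.tsum_le_tsum fun k => ?_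
                  have hbd : ∀ w ∈ A k, ENNReal.ofReal (f w) ≤
                      ENNReal.ofReal ((((k:ℝ)+1) * Real.log 2) ^ p) := fun w hw =>
                    ENNReal.ofReal_le_ofReal (hf_on_A k w hw)
                  have hμA : μ (A k) ≤ ENNReal.ofReal (M₂ * ((2:ℝ)⁻¹ ^ k) ^ ε) := by
                    have h1 : μ (A k) ≤ μ (Metric.ball z ((2:ℝ)⁻¹^k)) :=
                      measure_mono Set.diff_subset
                    have hrpos : (0:ℝ) < (2:ℝ)⁻¹ ^ k := by positivity
                    have hrle : ((2:ℝ)⁻¹) ^ k ≤ 2 :=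
                      le_trans (pow_le_one₀ (by norm_num) (by norm_num)) (by norm_num)
                    have h2 := (hball z hz _ hrpos hrle).2
                    have h3 : μ (Metric.ball z ((2:ℝ)⁻¹^k)) ≤
                        ENNReal.ofReal (M₂ * ((2:ℝ)⁻¹ ^ k) ^ ε) := by
                      rw [← ENNReal.ofReal_toReal (measure_ne_top μ (Metric.ball z ((2:ℝ)⁻¹^k)))]
                      exact ENNReal.ofReal_le_ofReal h2
                    exact le_trans h1 h3
                  calc ∫⁻ w in A k, ENNReal.ofReal (f w) ∂μ
                      ≤ ∫⁻ _ in A k, ENNReal.ofReal ((((k:ℝ)+1) * Real.log 2) ^ p) ∂μ :=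
                        setLIntegral_mono' (hA_meas k) hbd
                    _ = ENNReal.ofReal ((((k:ℝ)+1) * Real.log 2) ^ p) * μ (A k) :=
                        setLIntegral_const _ _
                    _ ≤ ENNReal.ofReal ((((k:ℝ)+1) * Real.log 2) ^ p) *
                        ENNReal.ofReal (M₂ * ((2:ℝ)⁻¹ ^ k) ^ ε) := by gcongr
                    _ = ENNReal.ofReal (c k) := by
                        rw [← ENNReal.ofReal_mul (by positivity)]
              _ = ENNReal.ofReal (∑' k, c k) :=
                  (ENNReal.ofReal_tsum_of_nonneg hc_nonneg hc_summable).symm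
  -- integrability
  have hInt : Integrable f μ := by
    refine ⟨hf_meas.aestronglyMeasurable, ?_⟩
    rw [hasFiniteIntegral_iff_ofReal (Filter.Eventually.of_forall hf_nonneg)]
    exact lt_of_le_of_lt hlint (lt_top_iff_ne_top.2 hT_ne_top)
  have hint_eq : ∫ w, f w ∂μ = (∫⁻ w, ENNReal.ofReal (f w) ∂μ).toReal :=
    integral_eq_lintegral_of_nonneg_ae (Filter.Eventually.of_forall hf_nonneg)
      hf_meas.aestronglyMeasurable
  constructor
  · -- lower bound
    set L : Set ℂ := Metric.ball z (2:ℝ)⁻¹ \ {z} with hL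
    have hL_meas : MeasurableSet L := measurableSet_ball.diff (measurableSet_singleton z)
    have hμL : μ L = μ (Metric.ball z (2:ℝ)⁻¹) := measure_diff_null hz_null
    have hf_on_L : ∀ w ∈ L, Real.log 2 ^ p ≤ f w := by
      intro w hw
      obtain ⟨hw1, hw2⟩ := hw
      have hdlt : ‖z - w‖ < (2:ℝ)⁻¹ := by
        rw [habs]; exact Metric.mem_ball.1 hw1
      have hdpos : (0:ℝ) < ‖z - w‖ := by
        rw [habs]
        exact dist_pos.2 (fun h => hw2 (Set.mem_singleton_iff.2 h))
      have hlogge : Real.log 2 ≤ |Real.log (‖z - w‖)| := by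
        have h1 : Real.log (‖z - w‖) ≤ Real.log (2:ℝ)⁻¹ :=
          Real.log_le_log hdpos hdlt.le
        rw [Real.log_inv] at h1
        have h2 : Real.log (‖z - w‖) ≤ 0 := by linarith
        rw [abs_of_nonpos h2]; linarith
      exact Real.rpow_le_rpow hlog2.le hlogge hp.le
    have hmeas_ball := (hball z hz (2:ℝ)⁻¹ (by norm_num) (by norm_num)).1
    calc Real.log 2 ^ p * (M₁ * (2:ℝ)⁻¹ ^ ε)
        ≤ Real.log 2 ^ p * (μ (Metric.ball z (2:ℝ)⁻¹)).toReal := by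
          have h1 : (0:ℝ) ≤ Real.log 2 ^ p := (Real.rpow_pos_of_pos hlog2 p).le
          exact mul_le_mul_of_nonneg_left hmeas_ball h1
      _ = Real.log 2 ^ p * (μ L).toReal := by rw [hμL]
      _ ≤ ∫ w in L, f w ∂μ :=
          by simpa [smul_eq_mul, mul_comm, Measure.real] using
            setIntegral_ge_of_const_le_real hL_meas (measure_ne_top μ _) hf_on_L hInt.integrableOn
      _ ≤ ∫ w, f w ∂μ :=
          setIntegral_le_integral hInt (Filter.Eventually.of_forall hf_nonneg)
  · -- upper bound
    rw [hint_eq]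
    exact ENNReal.toReal_mono hT_ne_top hlint
end

section
/- Let Q(z) = ∏ᵢ₌₁ⁿ (z − zᵢ) with n ≥ 2, and suppose there exists r > 0 such that: (i) |Q′(z₁)|·r/2 ≥ 1; (ii) for every 2 ≤ k ≤ n, |Q^{(k)}(z₁)|·r^k/k! < (1/(2n²))·|Q′(z₁)|·r; and (iii) min_{2 ≤ j ≤ n} |z₁ − z_j| > r. Then |Q(z)| ≥ 1 for every z with |z − z₁| = r; consequently the connected component of Λ(Q) = {z : |Q(z)| < 1} containing z₁ is contained in the open ball B(z₁, r) and contains no root z_j with j ≥ 2. -/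
open Polynomial Finset

lemma iteratedDeriv_polyEval (k : ℕ) (p : ℂ[X]) :
    iteratedDeriv k (fun x => p.eval x) = fun x => (derivative^[k] p).eval x := by
  induction k generalizing p with
  | zero => simp
  | succ k ih =>
    rw [iteratedDeriv_succ', Function.iterate_succ, Function.comp_apply]
    have : (deriv fun x => p.eval x) = fun x => (derivative p).eval x := by
      funext x; exact Polynomial.deriv (p := p)
    rw [this, ih]

/-- Sufficient condition for an isolated component: if the derivative of
`Q(z) = ∏ᵢ (z - zᵢ)` at `z₁` is large, higher derivatives are comparatively small,
and the other roots are at distance `> r`, then `|Q| ≥ 1` on the sphere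
`|z - z₁| = r`; consequently the component of the lemniscate containing `z₁` stays in
`B(z₁, r)` and contains no other root. -/
theorem isolated_component_criterion
    (n : ℕ) (hn : 2 ≤ n) (z : ℕ → ℂ) (r : ℝ) (hr : 0 < r)
    (Q : ℂ → ℂ) (hQ : Q = fun w => ∏ i ∈ Finset.Icc 1 n, (w - z i))
    (h1 : 1 ≤ ‖deriv Q (z 1)‖ * r / 2)
    (h2 : ∀ k, 2 ≤ k → k ≤ n →
      ‖iteratedDeriv k Q (z 1)‖ * r ^ k / (Nat.factorial k : ℝ) <
        (1 / (2 * (n : ℝ) ^ 2)) * (‖deriv Q (z 1)‖ * r))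
    (h3 : ∀ j, 2 ≤ j → j ≤ n → r < ‖z 1 - z j‖) :
    (∀ w : ℂ, ‖w - z 1‖ = r → 1 ≤ ‖Q w‖) ∧
    connectedComponentIn {w : ℂ | ‖Q w‖ < 1} (z 1) ⊆ Metric.ball (z 1) r ∧
    ∀ j, 2 ≤ j → j ≤ n →
      z j ∉ connectedComponentIn {w : ℂ | ‖Q w‖ < 1} (z 1) := by
  set P : ℂ[X] := ∏ i ∈ Finset.Icc 1 n, (X - C (z i)) with hP
  have hQP : Q = fun w => P.eval w := by
    funext w; simp [hQ, hP, eval_prod]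
  have hdeg : P.natDegree = n := by
    rw [hP, natDegree_prod_of_monic _ _ (fun i _ => monic_X_sub_C (z i))]
    simp
  set c : ℕ → ℂ := fun k => (taylor (z 1) P).coeff k with hc
  have hone : (1 : ℕ) ∈ Finset.Icc 1 n := by simp; omega
  have hQz1 : P.eval (z 1) = 0 := by
    rw [hP, eval_prod]
    exact Finset.prod_eq_zero hone (by simp)
  have hc0 : c 0 = 0 := by
    show (taylor (z 1) P).coeff 0 = 0
    simpa [taylor_coeff_zero] using hQz1
  have hc1 : ‖c 1‖ = ‖deriv Q (z 1)‖ := by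
    show ‖(taylor (z 1) P).coeff 1‖ = _
    rw [taylor_coeff_one, hQP, Polynomial.deriv]
  set A : ℝ := ‖deriv Q (z 1)‖ * r with hA
  have hAr : 2 ≤ A := by rw [hA]; linarith
  have hck : ∀ k, 2 ≤ k → k ≤ n →
      ‖c k‖ * r ^ k < (1 / (2 * (n : ℝ) ^ 2)) * A := by
    intro k hk2 hkn
    have hfac : (k.factorial : ℂ) * c k = iteratedDeriv k Q (z 1) := by
      rw [hQP, iteratedDeriv_polyEval]
      show (k.factorial : ℂ) * (taylor (z 1) P).coeff k = eval (z 1) (derivative^[k] P)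
      have hh := congrFun (Polynomial.factorial_smul_hasseDeriv (R := ℂ) k) P
      rw [taylor_coeff, ← hh]
      simp [nsmul_eq_mul]
    have habs : (k.factorial : ℝ) * ‖c k‖
        = ‖iteratedDeriv k Q (z 1)‖ := by
      rw [← hfac, norm_mul, Complex.norm_natCast]
    have hfp : (0:ℝ) < (k.factorial : ℝ) := by positivity
    have hlt := h2 k hk2 hkn
    rw [← habs] at hlt
    rw [hA]
    calc ‖c k‖ * r ^ k
        = (k.factorial : ℝ) * ‖c k‖ * r ^ k / (k.factorial : ℝ) := by
          field_simp
      _ < _ := hlt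
  -- Taylor expansion
  have hexp : ∀ w : ℂ, P.eval w = ∑ k ∈ Finset.range (n + 1), c k * (w - z 1) ^ k := by
    intro w
    have h1' : P.eval w = (taylor (z 1) P).eval (w - z 1) := by
      rw [taylor_eval]; ring_nf
    rw [h1', eval_eq_sum_range' (n := n + 1) (by rw [natDegree_taylor, hdeg]; omega)]
  have hsplit : Finset.range (n + 1) = insert 0 (insert 1 (Finset.Icc 2 n)) := by
    ext k; simp [Finset.mem_range, Finset.mem_Icc]; omega
  have hnn : (2:ℝ) ≤ (n:ℝ) := by exact_mod_cast hn
  -- main sphere bound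
  have key : ∀ w : ℂ, ‖w - z 1‖ = r → 1 ≤ ‖Q w‖ := by
    intro w hw
    rw [hQP]
    have hsum : P.eval w = c 1 * (w - z 1) + ∑ k ∈ Finset.Icc 2 n, c k * (w - z 1) ^ k := by
      rw [hexp w, hsplit, Finset.sum_insert (by simp), Finset.sum_insert (by simp), hc0]
      ring
    set T : ℂ := ∑ k ∈ Finset.Icc 2 n, c k * (w - z 1) ^ k with hT
    have hTbound : ‖T‖ ≤ (n - 1 : ℝ) * ((1 / (2 * (n : ℝ) ^ 2)) * A) := by
      calc ‖T‖ ≤ ∑ k ∈ Finset.Icc 2 n, ‖c k * (w - z 1) ^ k‖ :=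
            norm_sum_le _ _
        _ ≤ ∑ k ∈ Finset.Icc 2 n, (1 / (2 * (n : ℝ) ^ 2)) * A := by
            apply Finset.sum_le_sum
            intro k hk
            rw [Finset.mem_Icc] at hk
            rw [norm_mul, norm_pow, hw]
            exact (hck k hk.1 hk.2).le
        _ = (n - 1 : ℝ) * ((1 / (2 * (n : ℝ) ^ 2)) * A) := by
            rw [Finset.sum_const, Nat.card_Icc]
            have h21 : (n + 1 - 2 : ℕ) = n - 1 := by omega
            rw [h21, nsmul_eq_mul, Nat.cast_sub (by omega)]
            norm_num
    have hmain : ‖c 1 * (w - z 1)‖ ≤ ‖P.eval w‖ + ‖T‖ := by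
      calc ‖c 1 * (w - z 1)‖
          = ‖P.eval w - T‖ := by rw [hsum]; ring_nf
        _ ≤ _ := norm_sub_le _ _
    rw [norm_mul, hw, hc1] at hmain
    have hn2 : (0:ℝ) < (n:ℝ)^2 := by positivity
    have hTA : ‖T‖ ≤ A / 2 := by
      have hkey : (n - 1 : ℝ) * ((1 / (2 * (n : ℝ) ^ 2)) * A) ≤ A / 2 := by
        have heq : (n - 1 : ℝ) * ((1 / (2 * (n : ℝ) ^ 2)) * A)
            = (((n:ℝ) - 1) / (n:ℝ) ^ 2) * (A / 2) := by
          ring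
        have hle1 : ((n:ℝ) - 1) / (n:ℝ) ^ 2 ≤ 1 := by
          rw [div_le_one hn2]; nlinarith
        have hA2 : (0:ℝ) ≤ A / 2 := by linarith
        calc (n - 1 : ℝ) * ((1 / (2 * (n : ℝ) ^ 2)) * A)
            = (((n:ℝ) - 1) / (n:ℝ) ^ 2) * (A / 2) := heq
          _ ≤ 1 * (A / 2) := mul_le_mul_of_nonneg_right hle1 hA2
          _ = A / 2 := one_mul _
      linarith
    have : A ≤ ‖P.eval w‖ + ‖T‖ := hmain
    show 1 ≤ ‖P.eval w‖
    linarith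
  have hz1mem : z 1 ∈ {w : ℂ | ‖Q w‖ < 1} := by
    have : Q (z 1) = 0 := by rw [hQP]; exact hQz1
    simp [this]
  have hcomp : connectedComponentIn {w : ℂ | ‖Q w‖ < 1} (z 1)
      ⊆ Metric.ball (z 1) r := by
    have hz1S : z 1 ∈ connectedComponentIn {w : ℂ | ‖Q w‖ < 1} (z 1) :=
      mem_connectedComponentIn hz1mem
    have hsub : connectedComponentIn {w : ℂ | ‖Q w‖ < 1} (z 1)
        ⊆ Metric.ball (z 1) r ∪ (Metric.closedBall (z 1) r)ᶜ := by
      intro x hx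
      have hxΛ : ‖Q x‖ < 1 :=
        connectedComponentIn_subset {w : ℂ | ‖Q w‖ < 1} (z 1) hx
      have hne : ‖x - z 1‖ ≠ r := fun h => absurd (key x h) (by linarith)
      have hd : dist x (z 1) = ‖x - z 1‖ := Complex.dist_eq x (z 1)
      rcases lt_or_gt_of_ne hne with h | h
      · left; rw [Metric.mem_ball, hd]; exact h
      · right; simp only [Set.mem_compl_iff, Metric.mem_closedBall, not_le, hd]; exact h
    exact (isPreconnected_connectedComponentIn).subset_left_of_subset_union
      Metric.isOpen_ball Metric.isClosed_closedBall.isOpen_compl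
      (disjoint_compl_right.mono_left Metric.ball_subset_closedBall)
      hsub ⟨z 1, hz1S, Metric.mem_ball_self hr⟩
  refine ⟨key, hcomp, ?_⟩
  intro j hj2 hjn hmem
  have hb := hcomp hmem
  rw [Metric.mem_ball, Complex.dist_eq, norm_sub_rev] at hb
  exact absurd (h3 j hj2 hjn) (by linarith)
end

section
/- Let C > 0 and let Q(z) = ∏ᵢ₌₁ⁿ (z − zᵢ) be a monic polynomial of degree n with all roots in the closed unit disk. Set rₙ = n^{−3/4}, and suppose: (i) 0 < |Q′(z₁)| ≤ e^{−√n}; and (ii) for every 2 ≤ k ≤ n, |Q^{(k)}(z₁)|·rₙ^k/k! ≤ n²·binom(n−1, k−1)·(C·n^{−3/4})^{k−1}·|Q′(z₁)|·rₙ. Then for all z with |z − z₁| = rₙ, |Q(z)| ≤ n²·e^{−√n}·(1 + C·n^{−3/4})^{n−1}; in particular, for all n sufficiently large (depending only on C) this bound is < 1, and the closed ball of radius rₙ around z₁ is contained in Λ(Q) = {z : |Q(z)| < 1}. -/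
open Filter Polynomial

private lemma iteratedDeriv_eval' (P : Polynomial ℂ) (k : ℕ) :
    iteratedDeriv k (fun w => P.eval w) = fun w => ((derivative (R := ℂ))^[k] P).eval w := by
  induction k with
  | zero => simp
  | succ k ih =>
    rw [iteratedDeriv_succ, ih]
    funext w
    rw [Function.iterate_succ_apply']
    simp [Polynomial.deriv]

private lemma key_bound (C : ℝ) (hC : 0 ≤ C) (n : ℕ) (hn : 1 ≤ n) (z : ℕ → ℂ) (Q : ℂ → ℂ)
    (hQ : Q = (fun w => ∏ i ∈ Finset.Icc 1 n, (w - z i)))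
    (hder : ∀ k, 2 ≤ k → k ≤ n →
        ‖iteratedDeriv k Q (z 1)‖ * ((n : ℝ) ^ (-(3 : ℝ)/4)) ^ k
            / (Nat.factorial k : ℝ) ≤
          (n : ℝ) ^ 2 * (Nat.choose (n - 1) (k - 1) : ℝ) *
            (C * (n : ℝ) ^ (-(3 : ℝ)/4)) ^ (k - 1) *
            (‖deriv Q (z 1)‖ * (n : ℝ) ^ (-(3 : ℝ)/4)))
    (w : ℂ) (hw : ‖w - z 1‖ ≤ (n : ℝ) ^ (-(3 : ℝ)/4)) :
    ‖Q w‖ ≤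
      (n : ℝ) ^ 2 * (‖deriv Q (z 1)‖ * (n : ℝ) ^ (-(3 : ℝ)/4)) *
        (1 + C * (n : ℝ) ^ (-(3 : ℝ)/4)) ^ (n - 1) := by
  set q : ℝ := (n : ℝ) ^ (-(3 : ℝ)/4) with hq
  have hn0 : (0:ℝ) < n := by exact_mod_cast hn
  have hq0 : 0 < q := Real.rpow_pos_of_pos hn0 _
  set P : Polynomial ℂ := ∏ i ∈ Finset.Icc 1 n, (X - Polynomial.C (z i)) with hP
  have hQP : ∀ u, Q u = P.eval u := by
    intro u; simp [hQ, hP, Polynomial.eval_prod]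
  have hdeg : P.natDegree ≤ n := by
    refine (Polynomial.natDegree_prod_le _ _).trans ?_
    have hc : ∀ i ∈ Finset.Icc 1 n, (X - Polynomial.C (z i)).natDegree = 1 :=
      fun i _ => Polynomial.natDegree_X_sub_C _
    rw [Finset.sum_congr rfl hc]
    simp
  have hiter : ∀ k : ℕ, ‖(Polynomial.hasseDeriv k P).eval (z 1)‖
      = ‖iteratedDeriv k Q (z 1)‖ / (Nat.factorial k : ℝ) := by
    intro k
    have h1 : (fun u : ℂ => P.eval u) = Q := funext fun u => (hQP u).symm
    have h2 : iteratedDeriv k Q (z 1) = ((derivative (R := ℂ))^[k] P).eval (z 1) := by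
      rw [← h1, iteratedDeriv_eval' P k]
    have h3 : ((derivative (R := ℂ))^[k] P) = (k.factorial : ℕ) • (Polynomial.hasseDeriv k P) := by
      rw [← Polynomial.factorial_smul_hasseDeriv]
      rfl
    rw [h2, h3]
    have hf : (0:ℝ) < (Nat.factorial k : ℝ) := by positivity
    rw [eq_div_iff hf.ne']
    simp [nsmul_eq_mul, mul_comm]
  have hQz : Q (z 1) = 0 := by
    rw [hQ]
    exact Finset.prod_eq_zero (Finset.mem_Icc.mpr ⟨le_refl 1, hn⟩) (sub_self _)
  have hexp : Q w = ∑ k ∈ Finset.range (n+1),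
      (Polynomial.hasseDeriv k P).eval (z 1) * (w - z 1) ^ k := by
    rw [hQP, ← Polynomial.taylor_eval_sub (z 1)]
    rw [Polynomial.eval_eq_sum_range' (n := n+1)
      (by rw [Polynomial.natDegree_taylor]; exact Nat.lt_succ_of_le hdeg)]
    simp [Polynomial.taylor_coeff]
  have habs : ‖Q w‖ ≤ ∑ k ∈ Finset.range (n+1),
      ‖iteratedDeriv k Q (z 1)‖ * ‖w - z 1‖ ^ k / (Nat.factorial k : ℝ) := by
    rw [hexp]
    refine (norm_sum_le _ _).trans ?_
    refine Finset.sum_le_sum fun k _ => le_of_eq ?_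
    rw [norm_mul, norm_pow, hiter k]
    ring
  set A : ℝ := (n : ℝ) ^ 2 * (‖deriv Q (z 1)‖ * q) with hA
  have hA0 : 0 ≤ A := by positivity
  have hterm : ∀ i ∈ Finset.range n,
      ‖iteratedDeriv (i+1) Q (z 1)‖ * ‖w - z 1‖ ^ (i+1)
          / (Nat.factorial (i+1) : ℝ)
        ≤ A * ((C*q)^i * 1 ^ (n-1-i) * (Nat.choose (n-1) i : ℝ)) := by
    intro i hi
    have hstep : ‖iteratedDeriv (i+1) Q (z 1)‖ * ‖w - z 1‖ ^ (i+1)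
          / (Nat.factorial (i+1) : ℝ)
        ≤ ‖iteratedDeriv (i+1) Q (z 1)‖ * q ^ (i+1) / (Nat.factorial (i+1) : ℝ) := by
      gcongr
    rcases Nat.eq_zero_or_pos i with h0 | hpos
    · subst h0
      have hmul : ‖deriv Q (z 1)‖ * ‖w - z 1‖
          ≤ ‖deriv Q (z 1)‖ * q :=
        mul_le_mul_of_nonneg_left hw (norm_nonneg _)
      have h1n : (1:ℝ) ≤ (n:ℝ)^2 := by
        have h : (1:ℝ) ≤ (n:ℝ) := by exact_mod_cast hn
        nlinarith
      simp only [zero_add, pow_one, iteratedDeriv_one, Nat.factorial_one, Nat.cast_one, div_one,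
        pow_zero, one_pow, one_mul, mul_one, Nat.choose_zero_right, hA]
      nlinarith [hmul, norm_nonneg (deriv Q (z 1)),
        mul_nonneg (norm_nonneg (deriv Q (z 1))) hq0.le]
    · have h2 : 2 ≤ i+1 := by omega
      have hkn : i+1 ≤ n := Finset.mem_range.mp hi
      have hd := hder (i+1) h2 hkn
      have hrw : (i+1) - 1 = i := by omega
      rw [hrw] at hd
      refine hstep.trans (hd.trans (le_of_eq ?_))
      rw [hA]; ring
  calc ‖Q w‖
      ≤ ∑ k ∈ Finset.range (n+1),
        ‖iteratedDeriv k Q (z 1)‖ * ‖w - z 1‖ ^ k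
          / (Nat.factorial k : ℝ) := habs
    _ = (∑ i ∈ Finset.range n,
        ‖iteratedDeriv (i+1) Q (z 1)‖ * ‖w - z 1‖ ^ (i+1)
          / (Nat.factorial (i+1) : ℝ))
        + ‖iteratedDeriv 0 Q (z 1)‖ * ‖w - z 1‖ ^ 0
          / (Nat.factorial 0 : ℝ) := Finset.sum_range_succ' _ n
    _ = ∑ i ∈ Finset.range n,
        ‖iteratedDeriv (i+1) Q (z 1)‖ * ‖w - z 1‖ ^ (i+1)
          / (Nat.factorial (i+1) : ℝ) := by
        simp [iteratedDeriv_zero, hQz]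
    _ ≤ ∑ i ∈ Finset.range n, A * ((C*q)^i * 1 ^ (n-1-i) * (Nat.choose (n-1) i : ℝ)) :=
        Finset.sum_le_sum hterm
    _ = A * ∑ i ∈ Finset.range ((n-1)+1), ((C*q)^i * 1 ^ (n-1-i) * (Nat.choose (n-1) i : ℝ)) := by
        have hnn : (n-1)+1 = n := Nat.succ_pred_eq_of_pos hn
        rw [← Finset.mul_sum, hnn]
    _ = A * (C*q + 1) ^ (n-1) := by rw [← add_pow]
    _ = (n : ℝ) ^ 2 * (‖deriv Q (z 1)‖ * q) * (1 + C * q) ^ (n-1) := by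
        rw [hA, add_comm (C*q) 1]
private lemma key_bound2 (C : ℝ) (hC : 0 ≤ C) (n : ℕ) (hn : 1 ≤ n) (z : ℕ → ℂ) (Q : ℂ → ℂ)
    (hQ : Q = (fun w => ∏ i ∈ Finset.Icc 1 n, (w - z i)))
    (hQ' : ‖deriv Q (z 1)‖ ≤ Real.exp (-Real.sqrt n))
    (hder : ∀ k, 2 ≤ k → k ≤ n →
        ‖iteratedDeriv k Q (z 1)‖ * ((n : ℝ) ^ (-(3 : ℝ)/4)) ^ k
            / (Nat.factorial k : ℝ) ≤
          (n : ℝ) ^ 2 * (Nat.choose (n - 1) (k - 1) : ℝ) *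
            (C * (n : ℝ) ^ (-(3 : ℝ)/4)) ^ (k - 1) *
            (‖deriv Q (z 1)‖ * (n : ℝ) ^ (-(3 : ℝ)/4)))
    (w : ℂ) (hw : ‖w - z 1‖ ≤ (n : ℝ) ^ (-(3 : ℝ)/4)) :
    ‖Q w‖ ≤
      (n : ℝ) ^ 2 * Real.exp (-Real.sqrt n) * (1 + C * (n : ℝ) ^ (-(3 : ℝ)/4)) ^ (n - 1) := by
  refine (key_bound C hC n hn z Q hQ hder w hw).trans ?_
  set q : ℝ := (n : ℝ) ^ (-(3 : ℝ)/4) with hq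
  have hn0 : (0:ℝ) < n := by exact_mod_cast hn
  have hq0 : 0 < q := Real.rpow_pos_of_pos hn0 _
  have hq1 : q ≤ 1 :=
    Real.rpow_le_one_of_one_le_of_nonpos (by exact_mod_cast hn) (by norm_num)
  have h2 : ‖deriv Q (z 1)‖ * q ≤ Real.exp (-Real.sqrt n) := by
    have := mul_le_mul hQ' hq1 hq0.le (Real.exp_pos _).le
    rwa [mul_one] at this
  have hpow : (0:ℝ) ≤ (1 + C*q)^(n-1) := by
    apply pow_nonneg; nlinarith
  have hN : (0:ℝ) ≤ (n:ℝ)^2 := by positivity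
  calc (n:ℝ)^2 * (‖deriv Q (z 1)‖ * q) * (1+C*q)^(n-1)
      ≤ (n:ℝ)^2 * Real.exp (-Real.sqrt n) * (1+C*q)^(n-1) :=
        mul_le_mul_of_nonneg_right (mul_le_mul_of_nonneg_left h2 hN) hpow
    _ = (n:ℝ)^2 * Real.exp (-Real.sqrt n) * (1+C*q)^(n-1) := rfl

/-- Sufficient condition for a ball around a root to lie inside the lemniscate:
with `rₙ = n^{-3/4}`, if `0 < |Q'(z₁)| ≤ e^{-√n}` and the higher derivatives satisfy
`|Q⁽ᵏ⁾(z₁)| rₙᵏ/k! ≤ n² binom(n-1,k-1) (C n^{-3/4})^{k-1} |Q'(z₁)| rₙ`, then on the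
sphere `|z - z₁| = rₙ` one has `|Q(z)| ≤ n² e^{-√n} (1 + C n^{-3/4})^{n-1}`; moreover
for all large `n` (depending only on `C`) this bound is `< 1` and the closed ball
`B̄(z₁, rₙ)` is contained in the lemniscate `{|Q| < 1}`. -/
theorem ball_inside_lemniscate_criterion (C : ℝ) (hC : 0 < C) :
    (∀ n : ℕ, 1 ≤ n → ∀ z : ℕ → ℂ, ∀ Q : ℂ → ℂ,
      Q = (fun w => ∏ i ∈ Finset.Icc 1 n, (w - z i)) →
      (∀ i ∈ Finset.Icc 1 n, ‖z i‖ ≤ 1) →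
      0 < ‖deriv Q (z 1)‖ →
      ‖deriv Q (z 1)‖ ≤ Real.exp (-Real.sqrt n) →
      (∀ k, 2 ≤ k → k ≤ n →
        ‖iteratedDeriv k Q (z 1)‖ * ((n : ℝ) ^ (-(3 : ℝ)/4)) ^ k
            / (Nat.factorial k : ℝ) ≤
          (n : ℝ) ^ 2 * (Nat.choose (n - 1) (k - 1) : ℝ) *
            (C * (n : ℝ) ^ (-(3 : ℝ)/4)) ^ (k - 1) *
            (‖deriv Q (z 1)‖ * (n : ℝ) ^ (-(3 : ℝ)/4))) →
      ∀ w : ℂ, ‖w - z 1‖ = (n : ℝ) ^ (-(3 : ℝ)/4) →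
        ‖Q w‖ ≤
          (n : ℝ) ^ 2 * Real.exp (-Real.sqrt n) * (1 + C * (n : ℝ) ^ (-(3 : ℝ)/4)) ^ (n - 1)) ∧
    (∀ᶠ n : ℕ in atTop,
      (n : ℝ) ^ 2 * Real.exp (-Real.sqrt n) * (1 + C * (n : ℝ) ^ (-(3 : ℝ)/4)) ^ (n - 1) < 1 ∧
      ∀ z : ℕ → ℂ, ∀ Q : ℂ → ℂ,
        Q = (fun w => ∏ i ∈ Finset.Icc 1 n, (w - z i)) →
        (∀ i ∈ Finset.Icc 1 n, ‖z i‖ ≤ 1) →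
        0 < ‖deriv Q (z 1)‖ →
        ‖deriv Q (z 1)‖ ≤ Real.exp (-Real.sqrt n) →
        (∀ k, 2 ≤ k → k ≤ n →
          ‖iteratedDeriv k Q (z 1)‖ * ((n : ℝ) ^ (-(3 : ℝ)/4)) ^ k
              / (Nat.factorial k : ℝ) ≤
            (n : ℝ) ^ 2 * (Nat.choose (n - 1) (k - 1) : ℝ) *
              (C * (n : ℝ) ^ (-(3 : ℝ)/4)) ^ (k - 1) *
              (‖deriv Q (z 1)‖ * (n : ℝ) ^ (-(3 : ℝ)/4))) →
        Metric.closedBall (z 1) ((n : ℝ) ^ (-(3 : ℝ)/4)) ⊆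
          {w : ℂ | ‖Q w‖ < 1}) := by
  constructor
  · intro n hn z Q hQ _ _ hQ' hder w hw
    exact key_bound2 C hC.le n hn z Q hQ hQ' hder w (le_of_eq hw)
  · have h14 : Tendsto (fun n : ℕ => ((n:ℝ)) ^ ((1:ℝ)/4)) atTop atTop :=
      (tendsto_rpow_atTop (by norm_num)).comp tendsto_natCast_atTop_atTop
    have hev1 := h14.eventually_ge_atTop (362880 : ℝ)
    have hev2 := h14.eventually_gt_atTop (1 + C)
    have hev3 : ∀ᶠ n : ℕ in atTop, 1 ≤ n := eventually_ge_atTop 1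
    filter_upwards [hev1, hev2, hev3] with n h9 hCx hn
    have hn0 : (0:ℝ) < n := by exact_mod_cast hn
    set x : ℝ := (n:ℝ) ^ ((1:ℝ)/4) with hx
    set q : ℝ := (n:ℝ) ^ (-(3:ℝ)/4) with hq
    have hx0 : 0 < x := Real.rpow_pos_of_pos hn0 _
    have hq0 : 0 < q := Real.rpow_pos_of_pos hn0 _
    have hqn : q * n = x := by
      rw [hq, hx]
      nth_rewrite 2 [← Real.rpow_one (n:ℝ)]
      rw [← Real.rpow_add hn0]
      norm_num
    have hsqrt : Real.sqrt n = x * x := by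
      rw [Real.sqrt_eq_rpow, hx, ← Real.rpow_add hn0]; norm_num
    have hn2 : ((n:ℝ))^2 = x^8 := by
      rw [hx, ← Real.rpow_natCast ((n:ℝ) ^ ((1:ℝ)/4)) 8, ← Real.rpow_mul hn0.le,
        ← Real.rpow_natCast (n:ℝ) 2]
      norm_num
    have hx9 : x^9 / 362880 ≤ Real.exp x := by
      have h := Real.sum_le_exp_of_nonneg hx0.le 10
      have h2 : x^9 / (Nat.factorial 9 : ℝ) ≤ ∑ i ∈ Finset.range 10, x^i / (Nat.factorial i : ℝ) :=
        Finset.single_le_sum (f := fun i => x^i / (Nat.factorial i : ℝ))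
          (fun i _ => by positivity) (by simp)
      have h3 : (Nat.factorial 9 : ℝ) = 362880 := by norm_num [Nat.factorial]
      rw [h3] at h2
      exact h2.trans h
    have hn2exp : ((n:ℝ))^2 ≤ Real.exp x := by
      rw [hn2]
      refine le_trans ?_ hx9
      rw [le_div_iff₀ (by norm_num : (0:ℝ) < 362880)]
      nlinarith [pow_nonneg hx0.le 8, pow_succ x 8]
    have h1Cq : (0:ℝ) ≤ 1 + C * q := by nlinarith
    have hpow0 : (0:ℝ) ≤ (1 + C*q)^(n-1) := pow_nonneg h1Cq _
    have step123 : (1 + C*q)^(n-1) ≤ Real.exp (C * x) := by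
      have step1 : (1 + C * q)^(n-1) ≤ Real.exp (C * q) ^ (n-1) :=
        pow_le_pow_left₀ h1Cq (by linarith [Real.add_one_le_exp (C * q)]) _
      have step2 : Real.exp (C * q) ^ (n-1) = Real.exp (((n-1 : ℕ):ℝ) * (C * q)) :=
        (Real.exp_nat_mul _ _).symm
      have step3 : Real.exp (((n-1 : ℕ):ℝ) * (C * q)) ≤ Real.exp (C * x) := by
        apply Real.exp_le_exp.mpr
        have hle : ((n-1:ℕ):ℝ) ≤ (n:ℝ) := by exact_mod_cast Nat.sub_le n 1
        calc ((n-1:ℕ):ℝ) * (C * q) ≤ (n:ℝ) * (C * q) :=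
              mul_le_mul_of_nonneg_right hle (by positivity)
          _ = C * (q * n) := by ring
          _ = C * x := by rw [hqn]
      exact step1.trans (step2 ▸ step3)
    have hEbound : (n:ℝ)^2 * Real.exp (-Real.sqrt n) * (1 + C * q)^(n-1) < 1 := by
      calc (n:ℝ)^2 * Real.exp (-Real.sqrt n) * (1 + C*q)^(n-1)
          ≤ Real.exp x * Real.exp (-Real.sqrt n) * (1 + C*q)^(n-1) :=
            mul_le_mul_of_nonneg_right
              (mul_le_mul_of_nonneg_right hn2exp (Real.exp_pos _).le) hpow0
        _ ≤ Real.exp x * Real.exp (-Real.sqrt n) * Real.exp (C * x) :=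
            mul_le_mul_of_nonneg_left step123 (by positivity)
        _ = Real.exp (x + -(x*x) + C*x) := by
            rw [Real.exp_add, Real.exp_add, hsqrt]
        _ < 1 := by
            rw [Real.exp_lt_one_iff]
            nlinarith [mul_pos hx0 (sub_pos.mpr hCx)]
    refine ⟨hEbound, ?_⟩
    intro z Q hQz _ _ hQ' hder w hw
    rw [Metric.mem_closedBall, Complex.dist_eq] at hw
    have := key_bound2 C hC.le n hn z Q hQz hQ' hder w hw
    exact lt_of_le_of_lt this hEbound
end

section
/- Let X₂, …, Xₙ be i.i.d. uniform on the unit circle 𝕊¹ and let 0 ≤ r < 1. Then for every 1 ≤ k ≤ n−1, E[ | Σ_{2 ≤ i₁ < i₂ < … < i_k ≤ n} ∏_{m=1}^{k} 1/(r − X_{i_m}) |² ] = binom(n−1, k) · (1 − r²)^{−k}. -/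
open MeasureTheory ProbabilityTheory Real

/-- The uniform probability measure on the unit circle `𝕊¹ ⊂ ℂ`. -/
noncomputable def unifCircle : Measure ℂ :=
  Measure.map (fun θ : ℝ => Complex.exp (θ * Complex.I))
    ((volume (Set.Ioc (0 : ℝ) (2 * π)))⁻¹ • volume.restrict (Set.Ioc (0 : ℝ) (2 * π)))

lemma measurable_expI : Measurable (fun θ : ℝ => Complex.exp (θ * Complex.I)) :=
  Complex.measurable_exp.comp (Complex.measurable_ofReal.mul_const _)

lemma unifCircle_integral_eq (g : ℂ → ℂ) (hg : AEStronglyMeasurable g unifCircle) :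
    ∫ z, g z ∂unifCircle
      = ((2*π)⁻¹ : ℝ) • ∫ θ in (0:ℝ)..(2*π), g (Complex.exp (θ * Complex.I)) := by
  rw [unifCircle, integral_map measurable_expI.aemeasurable (by rwa [unifCircle] at hg),
    integral_smul_measure]
  congr 1
  · rw [Real.volume_Ioc]
    rw [sub_zero, ENNReal.toReal_inv, ENNReal.toReal_ofReal (by positivity : (0:ℝ) ≤ 2*π)]
  · rw [intervalIntegral.integral_of_le (by positivity)]

lemma expI_ne_zero (θ : ℝ) : Complex.exp (θ * Complex.I) ≠ 0 := Complex.exp_ne_zero _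

lemma abs_expI (θ : ℝ) : ‖Complex.exp (θ * Complex.I)‖ = 1 := by
  simpa using Complex.norm_exp_ofReal_mul_I θ

lemma intA {r : ℝ} (hr₀ : 0 ≤ r) (hr₁ : r < 1) :
    ∫ θ in (0:ℝ)..(2*π), ((r:ℂ) - Complex.exp (θ * Complex.I))⁻¹ = 0 := by
  by_cases hr : r = 0
  · subst hr
    have : ∀ θ : ℝ, (((0:ℝ):ℂ) - Complex.exp (θ * Complex.I))⁻¹
        = -Complex.exp ((-Complex.I) * θ) := by
      intro θ
      rw [Complex.ofReal_zero, zero_sub, inv_neg, ← Complex.exp_neg]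
      ring_nf
    rw [intervalIntegral.integral_congr (fun θ _ => this θ)]
    rw [intervalIntegral.integral_neg]
    rw [integral_exp_mul_complex (by simp [Complex.I_ne_zero])]
    simp [Complex.exp_neg, Complex.exp_two_pi_mul_I]
    rw [mul_comm Complex.I, Complex.exp_two_pi_mul_I]
    simp
  · have hrc : (r:ℂ) ≠ 0 := by exact_mod_cast hr
    have habs : ‖(r:ℂ)‖ < 1 := by
      simpa [Complex.norm_real, Real.norm_eq_abs, abs_of_nonneg hr₀] using hr₁
    have hball : (r:ℂ) ∈ Metric.ball (0:ℂ) 1 := by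
      simpa [Metric.mem_ball, Complex.dist_eq] using habs
    have h0ball : (0:ℂ) ∈ Metric.ball (0:ℂ) 1 := by simp
    have i1 : CircleIntegrable (fun z => (z - (0:ℂ))⁻¹) 0 1 := by
      rw [circleIntegrable_sub_inv_iff]
      right
      simp
    have i2 : CircleIntegrable (fun z => (z - (r:ℂ))⁻¹) 0 1 := by
      rw [circleIntegrable_sub_inv_iff]
      right
      intro hmem
      rw [Metric.mem_sphere, Complex.dist_eq] at hmem
      simp only [sub_zero] at hmem
      rw [abs_one] at hmem
      exact absurd hmem habs.ne
    have h3 : (∮ z in C(0,1), ((z - (0:ℂ))⁻¹ - (z - (r:ℂ))⁻¹)) = 0 := by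
      rw [circleIntegral.integral_sub i1 i2,
        circleIntegral.integral_sub_inv_of_mem_ball h0ball,
        circleIntegral.integral_sub_inv_of_mem_ball hball, sub_self]
    have key : ∀ θ : ℝ, ((r:ℂ) - Complex.exp (θ * Complex.I))⁻¹
        = (-Complex.I * (r:ℂ)⁻¹) * ((deriv (circleMap 0 1) θ • ((circleMap 0 1 θ - (0:ℂ))⁻¹ - (circleMap 0 1 θ - (r:ℂ))⁻¹))) := by
      intro θ
      have he : Complex.exp (θ * Complex.I) ≠ 0 := Complex.exp_ne_zero _
      have her : Complex.exp (θ * Complex.I) - (r:ℂ) ≠ 0 := by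
        intro h
        have h1 := abs_expI θ
        rw [sub_eq_zero.mp h] at h1
        rw [h1] at habs
        exact lt_irrefl _ habs
      have hre : (r:ℂ) - Complex.exp (θ * Complex.I) ≠ 0 := by
        intro h
        exact her (by rw [← neg_sub] at h; simpa using neg_eq_zero.mp h)
      simp only [deriv_circleMap, circleMap, zero_add, one_mul, Complex.ofReal_one, smul_eq_mul,
        sub_zero]
      field_simp
      linear_combination ((r:ℂ) *
        (Complex.exp (θ * Complex.I) - (r:ℂ))) * Complex.I_sq
    rw [intervalIntegral.integral_congr (fun θ _ => key θ)]
    rw [intervalIntegral.integral_const_mul]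
    have : (∫ θ in (0:ℝ)..(2*π), (deriv (circleMap 0 1) θ • ((circleMap 0 1 θ - (0:ℂ))⁻¹ - (circleMap 0 1 θ - (r:ℂ))⁻¹)))
        = ∮ z in C(0,1), ((z - (0:ℂ))⁻¹ - (z - (r:ℂ))⁻¹) := rfl
    rw [this, h3, mul_zero]

lemma intB {r : ℝ} (hr₀ : 0 ≤ r) (hr₁ : r < 1) :
    ∫ θ in (0:ℝ)..(2*π), (((r:ℂ) - Complex.exp (θ * Complex.I))⁻¹ *
        (starRingEnd ℂ) (((r:ℂ) - Complex.exp (θ * Complex.I))⁻¹))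
      = ((2*π : ℝ) : ℂ) * (((1 : ℝ) - r^2 : ℝ) : ℂ)⁻¹ := by
  have habs : ‖(r:ℂ)‖ < 1 := by
    simpa [Complex.norm_real, Real.norm_eq_abs, abs_of_nonneg hr₀] using hr₁
  have hball : (r:ℂ) ∈ Metric.ball (0:ℂ) 1 := by
    simpa [Metric.mem_ball, Complex.dist_eq] using habs
  set g : ℂ → ℂ := fun z => Complex.I * ((r:ℂ) * z - 1)⁻¹ with hg_def
  have hne : ∀ z : ℂ, ‖z‖ ≤ 1 → (r:ℂ) * z - 1 ≠ 0 := by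
    intro z hz h
    have : (r:ℂ) * z = 1 := sub_eq_zero.mp h
    have h1 : ‖(r:ℂ) * z‖ = 1 := by rw [this]; simp
    rw [norm_mul] at h1
    have : ‖(r:ℂ)‖ * ‖z‖ ≤ ‖(r:ℂ)‖ * 1 := by
      exact mul_le_mul_of_nonneg_left hz (norm_nonneg _)
    rw [h1] at this
    rw [mul_one] at this
    linarith
  have hgd : DiffContOnCl ℂ g (Metric.ball (0:ℂ) 1) := by
    apply DifferentiableOn.diffContOnCl
    rw [closure_ball (0:ℂ) one_ne_zero]
    intro z hz
    have hz1 : ‖z‖ ≤ 1 := by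
      simpa [Metric.mem_closedBall, Complex.dist_eq] using hz
    have hd : DifferentiableAt ℂ (fun z : ℂ => Complex.I * ((r:ℂ) * z - 1)⁻¹) z := by
      apply DifferentiableAt.const_mul
      apply DifferentiableAt.inv
      · exact (differentiableAt_id.const_mul _).sub_const 1
      · exact hne z hz1
    exact hd.differentiableWithinAt
  have hC := hgd.circleIntegral_sub_inv_smul hball
  have key : ∀ θ : ℝ, (((r:ℂ) - Complex.exp (θ * Complex.I))⁻¹ *
        (starRingEnd ℂ) (((r:ℂ) - Complex.exp (θ * Complex.I))⁻¹))
      = deriv (circleMap 0 1) θ •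
          ((circleMap 0 1 θ - (r:ℂ))⁻¹ • g (circleMap 0 1 θ)) := by
    intro θ
    set e := Complex.exp (θ * Complex.I) with he_def
    have he : e ≠ 0 := Complex.exp_ne_zero _
    have habse : ‖e‖ = 1 := abs_expI θ
    have hconj : (starRingEnd ℂ) e = e⁻¹ := by
      rw [he_def, ← Complex.exp_conj, ← Complex.exp_neg]
      congr 1
      rw [map_mul, Complex.conj_ofReal, Complex.conj_I]
      ring
    have her : e - (r:ℂ) ≠ 0 := by
      intro h
      rw [sub_eq_zero.mp h] at habse
      rw [habse] at habs
      exact lt_irrefl _ habs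
    have hre : (r:ℂ) - e ≠ 0 := fun h => her (by
      rw [← neg_sub] at h; simpa using neg_eq_zero.mp h)
    have hrei : (r:ℂ) - e⁻¹ ≠ 0 := by
      intro h
      have h2 : (r:ℂ) * e - 1 = ((r:ℂ) - e⁻¹) * e := by
        field_simp
      rw [h, zero_mul] at h2
      exact hne e habse.le h2
    have hne2 : (r:ℂ) * e - 1 ≠ 0 := hne e habse.le
    rw [map_inv₀, map_sub, hconj, Complex.conj_ofReal]
    simp only [deriv_circleMap, circleMap, zero_add, one_mul, Complex.ofReal_one, smul_eq_mul,
      hg_def]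
    rw [← he_def]
    field_simp
    linear_combination (e - (r:ℂ)) * Complex.I_sq
  rw [intervalIntegral.integral_congr (fun θ _ => key θ)]
  have : (∫ θ in (0:ℝ)..(2*π), deriv (circleMap 0 1) θ •
          ((circleMap 0 1 θ - (r:ℂ))⁻¹ • g (circleMap 0 1 θ)))
      = ∮ z in C(0,1), (z - (r:ℂ))⁻¹ • g z := rfl
  rw [this, hC]
  have h1 : ((1:ℝ) - r^2 : ℝ) ≠ 0 := by nlinarith
  have h1c : (((1:ℝ) - r^2 : ℝ) : ℂ) ≠ 0 := by exact_mod_cast h1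
  have h2 : (r:ℂ) * (r:ℂ) - 1 ≠ 0 := by
    intro h
    apply h1c
    have : ((r:ℂ)^2 - 1) = 0 := by rw [← h]; ring
    push_cast
    linear_combination -this
  simp only [hg_def, smul_eq_mul]
  have h1c' : (1 - (r:ℂ)^2) ≠ 0 := by
    intro h
    apply h1c
    push_cast
    linear_combination h
  field_simp
  have h3 : (r:ℂ)^2 - 1 ≠ 0 := by rw [sq]; exact h2
  rw [div_eq_iff h3]
  push_cast
  linear_combination (2 * (π:ℂ) * (1 - (r:ℂ)^2)) * Complex.I_sq

lemma unifCircle_ae_abs : ∀ᵐ z ∂unifCircle, ‖z‖ = 1 := by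
  have hs : MeasurableSet {z : ℂ | ‖z‖ = 1} :=
    continuous_norm.measurable (measurableSet_singleton (1:ℝ))
  rw [unifCircle]
  exact (ae_map_iff measurable_expI.aemeasurable hs).2
    (ae_of_all _ (fun θ => abs_expI θ))

lemma unifCircle_intA {r : ℝ} (hr₀ : 0 ≤ r) (hr₁ : r < 1) :
    ∫ z, ((r:ℂ) - z)⁻¹ ∂unifCircle = 0 := by
  have hm : Measurable (fun z : ℂ => ((r:ℂ) - z)⁻¹) := by fun_prop
  rw [unifCircle_integral_eq (fun z => ((r:ℂ) - z)⁻¹) hm.aestronglyMeasurable,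
    intA hr₀ hr₁, smul_zero]

lemma unifCircle_intB {r : ℝ} (hr₀ : 0 ≤ r) (hr₁ : r < 1) :
    ∫ z, (((r:ℂ) - z)⁻¹ * (starRingEnd ℂ) (((r:ℂ) - z)⁻¹)) ∂unifCircle
      = (((1 : ℝ) - r^2 : ℝ) : ℂ)⁻¹ := by
  have hm : Measurable (fun z : ℂ => ((r:ℂ) - z)⁻¹ * (starRingEnd ℂ) (((r:ℂ) - z)⁻¹)) := by
    apply Measurable.mul
    · fun_prop
    · exact Complex.continuous_conj.measurable.comp (by fun_prop)
  rw [unifCircle_integral_eq (fun z => ((r:ℂ) - z)⁻¹ * (starRingEnd ℂ) (((r:ℂ) - z)⁻¹))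
    hm.aestronglyMeasurable, intB hr₀ hr₁, Complex.real_smul]
  push_cast
  have : (π : ℂ) ≠ 0 := by exact_mod_cast Real.pi_ne_zero
  field_simp

lemma indep_integral_mul_complex {Ω : Type*} [MeasurableSpace Ω] {P : Measure Ω}
    {X Y : Ω → ℂ} (h : IndepFun X Y P) (hX : Integrable X P) (hY : Integrable Y P) :
    ∫ ω, X ω * Y ω ∂P = (∫ ω, X ω ∂P) * ∫ ω, Y ω ∂P := by
  have key_re : ∀ (f : Ω → ℂ), Integrable f P → (∫ ω, f ω ∂P).re = ∫ ω, (f ω).re ∂P :=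
    fun f hf => by simpa using (integral_re hf).symm
  have key_im : ∀ (f : Ω → ℂ), Integrable f P → (∫ ω, f ω ∂P).im = ∫ ω, (f ω).im ∂P :=
    fun f hf => by simpa using (integral_im hf).symm
  have hXr : Integrable (fun ω => (X ω).re) P := by simpa using hX.re
  have hXi : Integrable (fun ω => (X ω).im) P := by simpa using hX.im
  have hYr : Integrable (fun ω => (Y ω).re) P := by simpa using hY.re
  have hYi : Integrable (fun ω => (Y ω).im) P := by simpa using hY.im
  have hrr : IndepFun (fun ω => (X ω).re) (fun ω => (Y ω).re) P :=
    h.comp Complex.measurable_re Complex.measurable_re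
  have hri : IndepFun (fun ω => (X ω).re) (fun ω => (Y ω).im) P :=
    h.comp Complex.measurable_re Complex.measurable_im
  have hir : IndepFun (fun ω => (X ω).im) (fun ω => (Y ω).re) P :=
    h.comp Complex.measurable_im Complex.measurable_re
  have hii : IndepFun (fun ω => (X ω).im) (fun ω => (Y ω).im) P :=
    h.comp Complex.measurable_im Complex.measurable_im
  have irr := hrr.integral_mul_eq_mul_integral hXr.aestronglyMeasurable hYr.aestronglyMeasurable
  have iri := hri.integral_mul_eq_mul_integral hXr.aestronglyMeasurable hYi.aestronglyMeasurable
  have iir := hir.integral_mul_eq_mul_integral hXi.aestronglyMeasurable hYr.aestronglyMeasurable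
  have iii := hii.integral_mul_eq_mul_integral hXi.aestronglyMeasurable hYi.aestronglyMeasurable
  have mrr : Integrable (fun ω => (X ω).re * (Y ω).re) P := hrr.integrable_mul hXr hYr
  have mri : Integrable (fun ω => (X ω).re * (Y ω).im) P := hri.integrable_mul hXr hYi
  have mir : Integrable (fun ω => (X ω).im * (Y ω).re) P := hir.integrable_mul hXi hYr
  have mii : Integrable (fun ω => (X ω).im * (Y ω).im) P := hii.integrable_mul hXi hYi
  have hXY : Integrable (fun ω => X ω * Y ω) P := by
    have := h.integrable_mul hX hY
    simpa [Pi.mul_def] using this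
  simp only [Pi.mul_def] at irr iri iir iii
  apply Complex.ext
  · rw [key_re _ hXY, Complex.mul_re, key_re _ hX, key_re _ hY, key_im _ hX, key_im _ hY,
      ← irr, ← iii]
    simp only [Complex.mul_re]
    rw [integral_sub mrr mii]
  · rw [key_im _ hXY, Complex.mul_im, key_re _ hX, key_re _ hY, key_im _ hX, key_im _ hY,
      ← iri, ← iir]
    simp only [Complex.mul_im]
    rw [integral_add mri mir]
lemma integral_finset_prod_of_iIndep {Ω : Type*} [MeasurableSpace Ω] {P : Measure Ω}
    [IsProbabilityMeasure P]
    {g : ℕ → Ω → ℂ} (hindep : iIndepFun g P)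
    (hmeas : ∀ i, Measurable (g i)) (hint : ∀ i, Integrable (g i) P) (u : Finset ℕ) :
    Integrable (fun ω => ∏ j ∈ u, g j ω) P ∧
      ∫ ω, ∏ j ∈ u, g j ω ∂P = ∏ j ∈ u, ∫ ω, g j ω ∂P := by
  induction u using Finset.cons_induction with
  | empty => simp
  | cons i u hi ih =>
    have hIndep : IndepFun (fun ω => ∏ j ∈ u, g j ω) (g i) P := by
      have h2 := hindep.indepFun_finset_prod_of_notMem hmeas hi (s := u) (i := i)
      have he : (∏ j ∈ u, g j) = fun ω => ∏ j ∈ u, g j ω := by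
        funext ω; simp
      rwa [he] at h2
    constructor
    · simp only [Finset.prod_cons]
      have := hIndep.integrable_mul ih.1 (hint i)
      simpa [Pi.mul_def, mul_comm] using this
    · simp only [Finset.prod_cons]
      have := indep_integral_mul_complex hIndep.symm (hint i) ih.1
      rw [ih.2] at this
      exact this

section Pair

variable {Ω : Type*} [MeasurableSpace Ω] {P : Measure Ω} [IsProbabilityMeasure P]
  {X : ℕ → Ω → ℂ} (hmeas : ∀ i, Measurable (X i))
  (hindep : iIndepFun X P)
  (hdist : ∀ i, Measure.map (X i) P = unifCircle)
  {r : ℝ} (hr₀ : 0 ≤ r) (hr₁ : r < 1)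

include hmeas hdist in
lemma X_abs_ae (j : ℕ) : ∀ᵐ ω ∂P, ‖X j ω‖ = 1 := by
  have hs : MeasurableSet {z : ℂ | ‖z‖ = 1} :=
    continuous_norm.measurable (measurableSet_singleton (1:ℝ))
  have h := unifCircle_ae_abs
  rw [← hdist j] at h
  exact (ae_map_iff (hmeas j).aemeasurable hs).1 h

include hmeas hdist hr₀ hr₁ in
lemma f_bound_ae (j : ℕ) :
    ∀ᵐ ω ∂P, ‖((r:ℂ) - X j ω)⁻¹‖ ≤ (1 - r)⁻¹ := by
  filter_upwards [X_abs_ae hmeas hdist j] with ω hω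
  have h1 : 1 - r ≤ ‖(r:ℂ) - X j ω‖ := by
    have h2 := norm_sub_norm_le (X j ω) ((r:ℂ))
    rw [norm_sub_rev, Complex.norm_real, Real.norm_eq_abs,
      abs_of_nonneg hr₀, hω] at h2
    exact h2
  rw [norm_inv]
  exact inv_anti₀ (by linarith) h1

include hmeas hindep hdist hr₀ hr₁ in
lemma pair_integral (s t : Finset ℕ) (hcard : s.card = t.card) :
    Integrable (fun ω => (∏ j ∈ s, ((r:ℂ) - X j ω)⁻¹) *
        ∏ j ∈ t, (starRingEnd ℂ) (((r:ℂ) - X j ω)⁻¹)) P ∧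
      ∫ ω, (∏ j ∈ s, ((r:ℂ) - X j ω)⁻¹) *
          ∏ j ∈ t, (starRingEnd ℂ) (((r:ℂ) - X j ω)⁻¹) ∂P
        = if s = t then ((((1:ℝ) - r^2 : ℝ) : ℂ)⁻¹) ^ s.card else 0 := by
  classical
  set φ : ℕ → ℂ → ℂ := fun j z =>
    (if j ∈ s then ((r:ℂ) - z)⁻¹ else 1) *
      (if j ∈ t then (starRingEnd ℂ) (((r:ℂ) - z)⁻¹) else 1) with hφ_def
  have hφm : ∀ j, Measurable (φ j) := by
    intro j
    apply Measurable.mul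
    · split_ifs
      · fun_prop
      · exact measurable_const
    · split_ifs
      · exact Complex.continuous_conj.measurable.comp (by fun_prop)
      · exact measurable_const
  set g : ℕ → Ω → ℂ := fun j ω => φ j (X j ω) with hg_def
  have hgm : ∀ j, Measurable (g j) := fun j => (hφm j).comp (hmeas j)
  have hgindep : iIndepFun g P := hindep.comp φ hφm
  -- a.e. bound
  have hB : (1:ℝ) ≤ max 1 ((1 - r)⁻¹) := le_max_left _ _
  have hgint : ∀ j, Integrable (g j) P := by
    intro j
    apply Integrable.mono' (integrable_const ((max 1 ((1-r)⁻¹)) * max 1 ((1-r)⁻¹)))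
      ((hgm j).aestronglyMeasurable)
    filter_upwards [f_bound_ae hmeas hdist hr₀ hr₁ j] with ω hω
    rw [hg_def]
    simp only [hφ_def, norm_mul]
    apply mul_le_mul _ _ (norm_nonneg _) (le_trans zero_le_one hB)
    · split_ifs
      · exact le_trans hω (le_max_right _ _)
      · simpa using hB
    · split_ifs
      · rw [Complex.norm_conj]
        exact le_trans hω (le_max_right _ _)
      · simpa using hB
  -- product identity
  have hprod : ∀ ω, (∏ j ∈ s, ((r:ℂ) - X j ω)⁻¹) *
      ∏ j ∈ t, (starRingEnd ℂ) (((r:ℂ) - X j ω)⁻¹) = ∏ j ∈ s ∪ t, g j ω := by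
    intro ω
    rw [hg_def]
    simp only [hφ_def]
    rw [Finset.prod_mul_distrib]
    congr 1
    · rw [Finset.prod_ite_mem (s ∪ t) s (fun j => ((r:ℂ) - X j ω)⁻¹),
        Finset.union_inter_cancel_left]
    · rw [Finset.prod_ite_mem (s ∪ t) t (fun j => (starRingEnd ℂ) (((r:ℂ) - X j ω)⁻¹)),
        Finset.union_inter_cancel_right]
  have hkey := integral_finset_prod_of_iIndep hgindep hgm hgint (s ∪ t)
  -- individual integrals
  have hsingle : ∀ j, ∫ ω, g j ω ∂P = ∫ z, φ j z ∂unifCircle := by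
    intro j
    rw [← hdist j, integral_map (hmeas j).aemeasurable (hφm j).aestronglyMeasurable]
  constructor
  · have := hkey.1
    apply this.congr
    exact ae_of_all _ (fun ω => (hprod ω).symm)
  · rw [integral_congr_ae (ae_of_all _ hprod), hkey.2]
    by_cases hst : s = t
    · subst hst
      rw [if_pos rfl, Finset.union_self]
      rw [Finset.prod_congr rfl (fun j hj => ?_), Finset.prod_const]
      rw [hsingle j]
      have : φ j = fun z => ((r:ℂ) - z)⁻¹ * (starRingEnd ℂ) (((r:ℂ) - z)⁻¹) := by
        funext z
        rw [hφ_def]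
        simp [hj]
      rw [this, unifCircle_intB hr₀ hr₁]
    · rw [if_neg hst]
      -- find an index in exactly one of s, t
      have hex : (∃ j ∈ s, j ∉ t) ∨ (∃ j ∈ t, j ∉ s) := by
        by_contra h
        push_neg at h
        exact hst (Finset.Subset.antisymm (fun x hx => h.1 x hx) (fun x hx => h.2 x hx))
      have hzero : ∃ j ∈ s ∪ t, ∫ ω, g j ω ∂P = 0 := by
        rcases hex with ⟨j, hjs, hjt⟩ | ⟨j, hjt, hjs⟩
        · refine ⟨j, Finset.mem_union_left _ hjs, ?_⟩
          rw [hsingle j]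
          have : φ j = fun z => ((r:ℂ) - z)⁻¹ := by
            funext z; rw [hφ_def]; simp [hjs, hjt]
          rw [this, unifCircle_intA hr₀ hr₁]
        · refine ⟨j, Finset.mem_union_right _ hjt, ?_⟩
          rw [hsingle j]
          have : φ j = fun z => (starRingEnd ℂ) (((r:ℂ) - z)⁻¹) := by
            funext z; rw [hφ_def]; simp [hjs, hjt]
          rw [this]
          have hm : Measurable (fun z : ℂ => ((r:ℂ) - z)⁻¹) := by fun_prop
          rw [integral_conj, unifCircle_intA hr₀ hr₁, map_zero]
      obtain ⟨j, hj, hj0⟩ := hzero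
      exact Finset.prod_eq_zero hj hj0

end Pair


/-- Second-moment identity for elementary symmetric sums of `1/(r - Xⱼ)` with
`X₂, …, Xₙ` i.i.d. uniform on the unit circle and `0 ≤ r < 1`:
`E[|Σ_{i₁<⋯<i_k} ∏ₘ 1/(r - X_{iₘ})|²] = binom(n-1, k) (1 - r²)^{-k}`. -/
theorem second_moment_symmetric_sum
    {Ω : Type*} [MeasurableSpace Ω] (P : Measure Ω) [IsProbabilityMeasure P]
    (X : ℕ → Ω → ℂ) (hmeas : ∀ i, Measurable (X i))
    (hindep : iIndepFun X P)
    (hdist : ∀ i, Measure.map (X i) P = unifCircle)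
    (n : ℕ) (r : ℝ) (hr₀ : 0 ≤ r) (hr₁ : r < 1)
    (k : ℕ) (hk₁ : 1 ≤ k) (hk₂ : k ≤ n - 1) :
    ∫ ω, ‖∑ s ∈ Finset.powersetCard k (Finset.Icc 2 n),
        ∏ j ∈ s, ((r : ℂ) - X j ω)⁻¹‖ ^ 2 ∂P =
      (Nat.choose (n - 1) k : ℝ) * ((1 - r ^ 2)⁻¹) ^ k := by
  classical
  set A := Finset.Icc 2 n with hA_def
  have hAcard : A.card = n - 1 := by rw [hA_def, Nat.card_Icc]; omega
  set psc := Finset.powersetCard k A with hpsc_def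
  set c : ℂ := (((1:ℝ) - r^2 : ℝ) : ℂ)⁻¹ with hc
  set S : Ω → ℂ := fun ω => ∑ s ∈ psc, ∏ j ∈ s, ((r:ℂ) - X j ω)⁻¹ with hS
  have hpair : ∀ s ∈ psc, ∀ t ∈ psc,
      Integrable (fun ω => (∏ j ∈ s, ((r:ℂ) - X j ω)⁻¹) *
        ∏ j ∈ t, (starRingEnd ℂ) (((r:ℂ) - X j ω)⁻¹)) P ∧
      ∫ ω, (∏ j ∈ s, ((r:ℂ) - X j ω)⁻¹) *
          ∏ j ∈ t, (starRingEnd ℂ) (((r:ℂ) - X j ω)⁻¹) ∂P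
        = if s = t then c ^ s.card else 0 := by
    intro s hs t ht
    exact pair_integral hmeas hindep hdist hr₀ hr₁ s t
      (by rw [(Finset.mem_powersetCard.1 hs).2, (Finset.mem_powersetCard.1 ht).2])
  have hptwise : ∀ ω, S ω * (starRingEnd ℂ) (S ω)
      = ∑ s ∈ psc, ∑ t ∈ psc, (∏ j ∈ s, ((r:ℂ) - X j ω)⁻¹) *
          ∏ j ∈ t, (starRingEnd ℂ) (((r:ℂ) - X j ω)⁻¹) := by
    intro ω
    rw [hS]
    simp only [map_sum, map_prod]
    rw [Finset.sum_mul_sum]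
  have hSS_int : Integrable (fun ω => S ω * (starRingEnd ℂ) (S ω)) P := by
    have he : (fun ω => S ω * (starRingEnd ℂ) (S ω))
        = fun ω => ∑ s ∈ psc, ∑ t ∈ psc, (∏ j ∈ s, ((r:ℂ) - X j ω)⁻¹) *
            ∏ j ∈ t, (starRingEnd ℂ) (((r:ℂ) - X j ω)⁻¹) := funext hptwise
    rw [he]
    exact integrable_finset_sum _ (fun s hs => integrable_finset_sum _
      (fun t ht => (hpair s hs t ht).1))
  have hSS : ∫ ω, S ω * (starRingEnd ℂ) (S ω) ∂P = (Nat.choose (n-1) k : ℂ) * c ^ k := by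
    rw [integral_congr_ae (ae_of_all _ hptwise)]
    rw [integral_finset_sum _ (fun s hs => integrable_finset_sum _
      (fun t ht => (hpair s hs t ht).1))]
    have hinner : ∀ s ∈ psc, ∫ ω, (∑ t ∈ psc, (∏ j ∈ s, ((r:ℂ) - X j ω)⁻¹) *
          ∏ j ∈ t, (starRingEnd ℂ) (((r:ℂ) - X j ω)⁻¹)) ∂P = c ^ k := by
      intro s hs
      rw [integral_finset_sum _ (fun t ht => (hpair s hs t ht).1)]
      rw [Finset.sum_congr rfl (fun t ht => (hpair s hs t ht).2)]
      rw [Finset.sum_ite_eq psc s (fun _ => c ^ s.card), if_pos hs,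
        (Finset.mem_powersetCard.1 hs).2]
    rw [Finset.sum_congr rfl hinner, Finset.sum_const, Finset.card_powersetCard, hAcard,
      nsmul_eq_mul]
  have habs : ∀ ω, ‖S ω‖ ^ 2 = (S ω * (starRingEnd ℂ) (S ω)).re := by
    intro ω
    rw [Complex.mul_conj, Complex.ofReal_re, Complex.sq_norm]
  calc ∫ ω, ‖S ω‖ ^ 2 ∂P
      = ∫ ω, (S ω * (starRingEnd ℂ) (S ω)).re ∂P := by
        exact integral_congr_ae (ae_of_all _ habs)
    _ = (∫ ω, S ω * (starRingEnd ℂ) (S ω) ∂P).re := by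
        simpa using integral_re hSS_int
    _ = (Nat.choose (n - 1) k : ℝ) * ((1 - r ^ 2)⁻¹) ^ k := by
        rw [hSS]
        have : ((Nat.choose (n-1) k : ℂ) * c ^ k)
            = (((Nat.choose (n-1) k : ℝ) * ((1 - r^2)⁻¹) ^ k : ℝ) : ℂ) := by
          rw [hc]
          push_cast
          ring
        rw [this, Complex.ofReal_re]
end
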